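/- Let (A, B) be a pseudo-conditional pair with quotient matrix Q. Then (A, B) is legal if and only if the matrix Q has rank 1 and ∑_{s} (∑_{i} Q i s)⁻¹ = 1. -/

import Mathlib

/-- A pseudo-conditional pair `(A, B)` (entrywise positive, with
`∑ s, A i s = 1` for each `i` and `∑ i, B s i = 1` for each `s`) is legal
(i.e. there exist strictly positive probability vectors `p`, `q` with
`A i s * p i = B s i * q s` for all `i, s`) if and only if the quotient matrix
`Q i s = B s i / A i s` has rank 1 and `∑ s, (∑ i, Q i s)⁻¹ = 1`. -/
theorem legal_iff_rank_one_and_sum_inv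
    (n S : ℕ) (hn : 0 < n) (hS : 0 < S)
    (A : Fin n → Fin S → ℝ) (B : Fin S → Fin n → ℝ)
    (hApos : ∀ i s, 0 < A i s) (hBpos : ∀ s i, 0 < B s i)
    (hArow : ∀ i, ∑ s, A i s = 1) (hBrow : ∀ s, ∑ i, B s i = 1)
    (Q : Matrix (Fin n) (Fin S) ℝ) (hQ : ∀ i s, Q i s = B s i / A i s) :
    (∃ (p : Fin n → ℝ) (q : Fin S → ℝ),
        (∀ i, 0 < p i) ∧ (∀ s, 0 < q s) ∧
        (∑ i, p i = 1) ∧ (∑ s, q s = 1) ∧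
        (∀ i s, A i s * p i = B s i * q s)) ↔
      (Q.rank = 1 ∧ ∑ s, (∑ i, Q i s)⁻¹ = 1) := by
  have i0 : Fin n := ⟨0, hn⟩
  have s0 : Fin S := ⟨0, hS⟩
  have hQpos : ∀ i s, 0 < Q i s := fun i s => by
    rw [hQ]; exact div_pos (hBpos s i) (hApos i s)
  constructor
  · rintro ⟨p, q, hp, hq, hps, hqs, h⟩
    have hQpq : ∀ i s, Q i s = p i * (q s)⁻¹ := by
      intro i s
      rw [hQ, ← div_eq_mul_inv, div_eq_div_iff (ne_of_gt (hApos i s)) (ne_of_gt (hq s))]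
      linear_combination -h i s
    have hcol : ∀ s, Q.transpose s = (q s)⁻¹ • p := by
      intro s; funext i
      simp [Matrix.transpose_apply, hQpq i s, mul_comm]
    have hspan : Submodule.span ℝ (Set.range Q.transpose) = Submodule.span ℝ {p} := by
      apply le_antisymm
      · rw [Submodule.span_le]
        rintro _ ⟨s, rfl⟩
        rw [hcol]
        exact Submodule.smul_mem _ _ (Submodule.mem_span_singleton_self p)
      · rw [Submodule.span_le, Set.singleton_subset_iff]
        have hps0 : p = q s0 • Q.transpose s0 := by
          rw [hcol, smul_smul, mul_inv_cancel₀ (ne_of_gt (hq s0)), one_smul]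
        rw [hps0]
        exact Submodule.smul_mem _ _ (Submodule.subset_span ⟨s0, rfl⟩)
    constructor
    · rw [Matrix.rank_eq_finrank_span_cols, show Set.range Q.col = Set.range Q.transpose from rfl, hspan]
      exact finrank_span_singleton (fun hp0 => by
        have := congrFun hp0 i0
        simp only [Pi.zero_apply] at this
        exact absurd this (ne_of_gt (hp i0)))
    · have hsumcol : ∀ s, (∑ i, Q i s)⁻¹ = q s := by
        intro s
        have : ∑ i, Q i s = (q s)⁻¹ := by
          rw [Finset.sum_congr rfl (fun i _ => hQpq i s), ← Finset.sum_mul, hps, one_mul]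
        rw [this, inv_inv]
      rw [Finset.sum_congr rfl (fun s _ => hsumcol s), hqs]
  · rintro ⟨hrank, hsum⟩
    rw [Matrix.rank_eq_finrank_span_cols] at hrank
    obtain ⟨v, hv0, hv⟩ := finrank_eq_one_iff'.mp hrank
    set c : Fin n → ℝ := (v : Fin n → ℝ) with hc
    have hfac : ∀ s, ∃ d : ℝ, ∀ i, Q i s = d * c i := by
      intro s
      obtain ⟨d, hd⟩ := hv ⟨Q.transpose s, Submodule.subset_span ⟨s, rfl⟩⟩
      refine ⟨d, fun i => ?_⟩
      have h1 : d • c = Q.transpose s := congrArg Subtype.val hd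
      have := congrFun h1 i
      simpa [Matrix.transpose_apply, eq_comm] using this
    have hsumpos : ∀ s, 0 < ∑ i, Q i s := fun s =>
      Finset.sum_pos (fun i _ => hQpos i s) ⟨i0, Finset.mem_univ i0⟩
    have key : ∀ i s, Q i s * (∑ j, Q j s)⁻¹ = c i * (∑ j, c j)⁻¹ := by
      intro i s
      obtain ⟨d, hd⟩ := hfac s
      have hsc : ∑ j, Q j s = d * ∑ j, c j := by
        rw [Finset.mul_sum]; exact Finset.sum_congr rfl fun j _ => hd j
      have hdn : d ≠ 0 := by
        intro h0
        rw [h0, zero_mul] at hsc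
        exact absurd hsc (ne_of_gt (hsumpos s))
      have hscn : (∑ j, c j) ≠ 0 := by
        intro h0; rw [h0, mul_zero] at hsc
        exact absurd hsc (ne_of_gt (hsumpos s))
      rw [hd i, hsc, mul_inv]
      field_simp
    refine ⟨fun i => Q i s0 * (∑ j, Q j s0)⁻¹, fun s => (∑ i, Q i s)⁻¹,
      fun i => mul_pos (hQpos i s0) (inv_pos.mpr (hsumpos s0)),
      fun s => inv_pos.mpr (hsumpos s), ?_, hsum, ?_⟩
    · rw [← Finset.sum_mul, mul_inv_cancel₀ (ne_of_gt (hsumpos s0))]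
    · intro i s
      have h1 : Q i s0 * (∑ j, Q j s0)⁻¹ = Q i s * (∑ j, Q j s)⁻¹ := by
        rw [key i s0, key i s]
      dsimp only
      rw [h1, hQ i s]
      field_simp
      exact mul_div_mul_left _ _ (ne_of_gt (hApos i s))
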